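/- For all p, q ∈ ℝⁿ and ω ∈ S^{n−1}, the Glassey–Strauss post-collisional variables satisfy the invariance ω·(p⁰q − q⁰p) = ω·(q′⁰p′ − p′⁰q′). Consequently a(p′, q′, ω) = −a(p, q, ω), so that applying the Glassey–Strauss collision map to (p′, q′) with the same ω returns (p, q). -/

import Mathlib

noncomputable section

open MeasureTheory Metric Matrix

namespace RelBoltz

/-- The energy `p⁰ = √(c² + |p|²)` of a relativistic particle with momentum `p ∈ ℝⁿ`. -/
def energy (n : ℕ) (c : ℝ) (p : EuclideanSpace ℝ (Fin n)) : ℝ :=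
  Real.sqrt (c ^ 2 + ‖p‖ ^ 2)

/-- The Euclidean dot product on `ℝⁿ`. -/
def dot (n : ℕ) (p q : EuclideanSpace ℝ (Fin n)) : ℝ := ∑ i, p i * q i

/-- The relative momentum `ϱ(p,q) = √(2(p⁰q⁰ − p·q − c²))`. -/
def relMom (n : ℕ) (c : ℝ) (p q : EuclideanSpace ℝ (Fin n)) : ℝ :=
  Real.sqrt (2 * (energy n c p * energy n c q - dot n p q - c ^ 2))

/-- The quantity `s(p,q) = 2(p⁰q⁰ − p·q + c²)`. -/
def sQ (n : ℕ) (c : ℝ) (p q : EuclideanSpace ℝ (Fin n)) : ℝ :=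
  2 * (energy n c p * energy n c q - dot n p q + c ^ 2)

/-- The Minkowski metric `g = diag(−1, 1, …, 1)` as a `(1+n)×(1+n)` matrix. -/
def eta (n : ℕ) : Matrix (Fin (n + 1)) (Fin (n + 1)) ℝ :=
  Matrix.diagonal fun μ => if μ = 0 then -1 else 1

/-- A proper Lorentz transformation: `det Λ = 1` and `Λᵀ g Λ = g`. -/
def IsLorentz (n : ℕ) (Λ : Matrix (Fin (n + 1)) (Fin (n + 1)) ℝ) : Prop :=
  Λ.det = 1 ∧ Λᵀ * eta n * Λ = eta n

/-- The four-vector `p^μ = (p⁰, p) ∈ ℝ^{1+n}`. -/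
def fourVec (n : ℕ) (c : ℝ) (p : EuclideanSpace ℝ (Fin n)) : Fin (n + 1) → ℝ :=
  Fin.cons (energy n c p) fun i => p i

/-- Condition (CM): `Λ^μ_ν (p^ν + q^ν) = (√s, 0, …, 0)`. -/
def CM (n : ℕ) (c : ℝ) (Λ : Matrix (Fin (n + 1)) (Fin (n + 1)) ℝ)
    (p q : EuclideanSpace ℝ (Fin n)) : Prop :=
  Λ.mulVec (fourVec n c p + fourVec n c q) = Fin.cons (Real.sqrt (sQ n c p q)) (fun _ => (0 : ℝ))

/-- The candidate inverse `g Λᵀ g` of a Lorentz transformation. -/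
def Linv (n : ℕ) (Λ : Matrix (Fin (n + 1)) (Fin (n + 1)) ℝ) :
    Matrix (Fin (n + 1)) (Fin (n + 1)) ℝ :=
  eta n * Λᵀ * eta n

/-- The quantity `ρ = (p⁰+q⁰)/√s` appearing in the boost matrix. -/
def rhoB (n : ℕ) (c : ℝ) (p q : EuclideanSpace ℝ (Fin n)) : ℝ :=
  (energy n c p + energy n c q) / Real.sqrt (sQ n c p q)

/-- The boost matrix `Λ_b = [[ρ, −ρ vᵀ], [−ρ v, Iₙ + (ρ−1) v vᵀ/|v|²]]`
with `v = (p+q)/(p⁰+q⁰)`. -/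
def boost (n : ℕ) (c : ℝ) (p q : EuclideanSpace ℝ (Fin n)) :
    Matrix (Fin (n + 1)) (Fin (n + 1)) ℝ :=
  Matrix.of fun μ ν =>
    Fin.cases
      (Fin.cases (rhoB n c p q)
        (fun j => -rhoB n c p q * ((p j + q j) / (energy n c p + energy n c q))) ν)
      (fun i =>
        Fin.cases (-rhoB n c p q * ((p i + q i) / (energy n c p + energy n c q)))
          (fun j =>
            (if i = j then (1 : ℝ) else 0) +
              (rhoB n c p q - 1) *
                ((p i + q i) / (energy n c p + energy n c q)) *
                ((p j + q j) / (energy n c p + energy n c q)) /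
                (∑ k, ((p k + q k) / (energy n c p + energy n c q)) ^ 2)) ν) μ

/-- The vector `k ∈ ℝⁿ`, `k^i = Λ^i_μ (p^μ − q^μ)` (spatial rows of `Λ` applied
to `p^μ − q^μ`). -/
def kvec (n : ℕ) (c : ℝ) (Λ : Matrix (Fin (n + 1)) (Fin (n + 1)) ℝ)
    (p q : EuclideanSpace ℝ (Fin n)) : EuclideanSpace ℝ (Fin n) :=
  WithLp.toLp 2 fun i => Λ.mulVec (fourVec n c p - fourVec n c q) i.succ

/-- `ω̄^μ = (√s/2, (ϱ/2)ω)`. -/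
def wbar (n : ℕ) (c : ℝ) (p q ω : EuclideanSpace ℝ (Fin n)) : Fin (n + 1) → ℝ :=
  Fin.cons (Real.sqrt (sQ n c p q) / 2) fun i => (relMom n c p q / 2) * ω i

/-- `ω̃^μ = (√s/2, −(ϱ/2)ω)`. -/
def wtil (n : ℕ) (c : ℝ) (p q ω : EuclideanSpace ℝ (Fin n)) : Fin (n + 1) → ℝ :=
  Fin.cons (Real.sqrt (sQ n c p q) / 2) fun i => -(relMom n c p q / 2) * ω i

/-- The center-of-momentum post-collisional four-vector `p′^μ = (Λ⁻¹)^μ_ν ω̄^ν`. -/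
def postP (n : ℕ) (c : ℝ) (Λ : Matrix (Fin (n + 1)) (Fin (n + 1)) ℝ)
    (p q ω : EuclideanSpace ℝ (Fin n)) : Fin (n + 1) → ℝ :=
  (Linv n Λ).mulVec (wbar n c p q ω)

/-- The center-of-momentum post-collisional four-vector `q′^μ = (Λ⁻¹)^μ_ν ω̃^ν`. -/
def postQ (n : ℕ) (c : ℝ) (Λ : Matrix (Fin (n + 1)) (Fin (n + 1)) ℝ)
    (p q ω : EuclideanSpace ℝ (Fin n)) : Fin (n + 1) → ℝ :=
  (Linv n Λ).mulVec (wtil n c p q ω)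

/-- The spatial part of a vector in `ℝ^{1+n}`. -/
def spat (n : ℕ) (u : Fin (n + 1) → ℝ) : EuclideanSpace ℝ (Fin n) :=
  WithLp.toLp 2 fun i => u i.succ

/-- `D₁ = (p⁰+q⁰)² − (ω·(p+q))²`. -/
def D1 (n : ℕ) (c : ℝ) (p q ω : EuclideanSpace ℝ (Fin n)) : ℝ :=
  (energy n c p + energy n c q) ^ 2 - dot n ω (p + q) ^ 2

/-- `D₂ = (p⁰+q⁰){ω·(p⁰q − q⁰p)}`. -/
def D2 (n : ℕ) (c : ℝ) (p q ω : EuclideanSpace ℝ (Fin n)) : ℝ :=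
  (energy n c p + energy n c q) * dot n ω (energy n c p • q - energy n c q • p)

/-- `a(p,q,ω) = 2(p⁰+q⁰){ω·(p⁰q − q⁰p)}/D₁`. -/
def aGS (n : ℕ) (c : ℝ) (p q ω : EuclideanSpace ℝ (Fin n)) : ℝ :=
  2 * (energy n c p + energy n c q) * dot n ω (energy n c p • q - energy n c q • p) /
    D1 n c p q ω

/-- `N⁰(p,q,ω) = 2{ω·(p+q)}{ω·(p⁰q − q⁰p)}/D₁`. -/
def N0 (n : ℕ) (c : ℝ) (p q ω : EuclideanSpace ℝ (Fin n)) : ℝ :=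
  2 * dot n ω (p + q) * dot n ω (energy n c p • q - energy n c q • p) / D1 n c p q ω

/-- The Glassey–Strauss post-collisional momentum `p′ = p + a(p,q,ω)ω`. -/
def gsP (n : ℕ) (c : ℝ) (p q ω : EuclideanSpace ℝ (Fin n)) : EuclideanSpace ℝ (Fin n) :=
  p + aGS n c p q ω • ω

/-- The Glassey–Strauss post-collisional momentum `q′ = q − a(p,q,ω)ω`. -/
def gsQ (n : ℕ) (c : ℝ) (p q ω : EuclideanSpace ℝ (Fin n)) : EuclideanSpace ℝ (Fin n) :=
  q - aGS n c p q ω • ω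

/-- The Glassey–Strauss kernel `B(p,q,ω)`. -/
def BGS (n : ℕ) (c : ℝ) (p q ω : EuclideanSpace ℝ (Fin n)) : ℝ :=
  c * (energy n c p + energy n c q) ^ 2 * energy n c p * energy n c q *
    |dot n ω ((energy n c p)⁻¹ • p - (energy n c q)⁻¹ • q)| / D1 n c p q ω ^ 2

/-- The dimensional factor `A(p,q,ω)`. -/
def AGS (n : ℕ) (c : ℝ) (p q ω : EuclideanSpace ℝ (Fin n)) : ℝ :=
  (4 / relMom n c p q) * (energy n c p + energy n c q) * energy n c p * energy n c q *
    |dot n ω ((energy n c p)⁻¹ • p - (energy n c q)⁻¹ • q)| / D1 n c p q ω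

/-- The dimensional Glassey–Strauss kernel `B_n(p,q,ω) = B(p,q,ω)·(A(p,q,ω))^{n−3}`. -/
def Bn (n : ℕ) (c : ℝ) (p q ω : EuclideanSpace ℝ (Fin n)) : ℝ :=
  BGS n c p q ω * AGS n c p q ω ^ ((n : ℤ) - 3)

/-- The Møller velocity `v_ø(p,q) = (c/4) ϱ √s / (p⁰q⁰)`. -/
def moller (n : ℕ) (c : ℝ) (p q : EuclideanSpace ℝ (Fin n)) : ℝ :=
  (c / 4) * relMom n c p q * Real.sqrt (sQ n c p q) / (energy n c p * energy n c q)

/-- The explicit boost form of the combination appearing in the center-of-momentum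
post-collisional momenta. -/
def cmDir (n : ℕ) (c : ℝ) (p q ω : EuclideanSpace ℝ (Fin n)) : EuclideanSpace ℝ (Fin n) :=
  ω + ((rhoB n c p q - 1) * dot n (p + q) ω / ‖p + q‖ ^ 2) • (p + q)

/-- The explicit boost form of the center-of-momentum post-collisional momentum `p′`. -/
def cmP (n : ℕ) (c : ℝ) (p q ω : EuclideanSpace ℝ (Fin n)) : EuclideanSpace ℝ (Fin n) :=
  (1 / 2 : ℝ) • (p + q) + (relMom n c p q / 2) • cmDir n c p q ω

/-- The explicit boost form of the center-of-momentum post-collisional momentum `q′`. -/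
def cmQ (n : ℕ) (c : ℝ) (p q ω : EuclideanSpace ℝ (Fin n)) : EuclideanSpace ℝ (Fin n) :=
  (1 / 2 : ℝ) • (p + q) - (relMom n c p q / 2) • cmDir n c p q ω

/-- The explicit boost form of the vector `k`. -/
def kB (n : ℕ) (c : ℝ) (p q : EuclideanSpace ℝ (Fin n)) : EuclideanSpace ℝ (Fin n) :=
  (-(energy n c p - energy n c q) / Real.sqrt (sQ n c p q)) • (p + q) + (p - q) +
    ((rhoB n c p q - 1) * dot n (p + q) (p - q) / ‖p + q‖ ^ 2) • (p + q)

/-- The center-of-momentum scattering angle `cos θ_cm = (k/|k|)·ω`. -/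
def cosCM (n : ℕ) (c : ℝ) (p q ω : EuclideanSpace ℝ (Fin n)) : ℝ :=
  dot n (kB n c p q) ω / ‖kB n c p q‖

/-- The Glassey–Strauss scattering angle
`cos θ_gs = 1 − 8{ω·(p⁰q − q⁰p)}²/(D₁ϱ²)`. -/
def cosGS (n : ℕ) (c : ℝ) (p q ω : EuclideanSpace ℝ (Fin n)) : ℝ :=
  1 - 8 * dot n ω (energy n c p • q - energy n c q • p) ^ 2 /
    (D1 n c p q ω * relMom n c p q ^ 2)

/-- The surface measure on the unit sphere `S^{n−1} ⊂ ℝⁿ`. -/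
def sphMeasure (n : ℕ) : Measure (sphere (0 : EuclideanSpace ℝ (Fin n)) 1) :=
  (volume : Measure (EuclideanSpace ℝ (Fin n))).toSphere


/-! ### Auxiliary lemmas for Statement 14 -/

lemma dot_add_right (n : ℕ) (ω p q : EuclideanSpace ℝ (Fin n)) :
    dot n ω (p + q) = dot n ω p + dot n ω q := by
  simp [dot, ← Finset.sum_add_distrib, mul_add]

lemma dot_sub_right (n : ℕ) (ω p q : EuclideanSpace ℝ (Fin n)) :
    dot n ω (p - q) = dot n ω p - dot n ω q := by
  simp [dot, ← Finset.sum_sub_distrib, mul_sub]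

lemma dot_smul_right (n : ℕ) (r : ℝ) (ω p : EuclideanSpace ℝ (Fin n)) :
    dot n ω (r • p) = r * dot n ω p := by
  simp [dot, Finset.mul_sum, mul_comm, mul_left_comm]

lemma dot_comm' (n : ℕ) (p q : EuclideanSpace ℝ (Fin n)) : dot n p q = dot n q p := by
  simp [dot, mul_comm]

lemma dot_add_left (n : ℕ) (p q ω : EuclideanSpace ℝ (Fin n)) :
    dot n (p + q) ω = dot n p ω + dot n q ω := by
  rw [dot_comm' n (p + q) ω, dot_add_right, dot_comm' n ω p, dot_comm' n ω q]

lemma dot_smul_left (n : ℕ) (r : ℝ) (p ω : EuclideanSpace ℝ (Fin n)) :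
    dot n (r • p) ω = r * dot n p ω := by
  rw [dot_comm' n (r • p) ω, dot_smul_right, dot_comm' n ω p]

lemma dot_sub_left (n : ℕ) (p q ω : EuclideanSpace ℝ (Fin n)) :
    dot n (p - q) ω = dot n p ω - dot n q ω := by
  rw [dot_comm' n (p - q) ω, dot_sub_right, dot_comm' n ω p, dot_comm' n ω q]

lemma dot_eq_inner (n : ℕ) (p q : EuclideanSpace ℝ (Fin n)) :
    dot n p q = (inner ℝ p q : ℝ) := by
  simp [dot, PiLp.inner_apply, RCLike.inner_apply, conj_trivial, mul_comm]

lemma norm_sq_eq_dot (n : ℕ) (p : EuclideanSpace ℝ (Fin n)) : ‖p‖ ^ 2 = dot n p p := by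
  rw [dot_eq_inner, ← real_inner_self_eq_norm_sq]

lemma energy_pos (n : ℕ) {c : ℝ} (hc : 0 < c) (p : EuclideanSpace ℝ (Fin n)) :
    0 < energy n c p :=
  Real.sqrt_pos.2 (by positivity)

lemma energy_sq (n : ℕ) {c : ℝ} (hc : 0 < c) (p : EuclideanSpace ℝ (Fin n)) :
    energy n c p ^ 2 = c ^ 2 + ‖p‖ ^ 2 :=
  Real.sq_sqrt (by positivity)

lemma abs_dot_lt_energy (n : ℕ) {c : ℝ} (hc : 0 < c) {ω : EuclideanSpace ℝ (Fin n)}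
    (hω : ‖ω‖ = 1) (p : EuclideanSpace ℝ (Fin n)) : |dot n ω p| < energy n c p := by
  have h1 : |dot n ω p| ≤ ‖p‖ := by
    rw [dot_eq_inner]
    calc |(inner ℝ ω p : ℝ)| ≤ ‖ω‖ * ‖p‖ := abs_real_inner_le_norm ω p
    _ = ‖p‖ := by rw [hω, one_mul]
  have h2 : ‖p‖ < energy n c p := by
    have hE := energy_pos n hc p
    have hsq := energy_sq n hc p
    nlinarith [norm_nonneg p]
  linarith

/-- Core algebraic facts about the Glassey–Strauss collision, abstracted over reals. -/
lemma gs_core (ep eqv α β D m a N : ℝ) (hep : 0 < ep) (heq : 0 < eqv)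
    (h1 : -ep < α) (h2 : α < ep) (h3 : -eqv < β) (h4 : β < eqv)
    (hD : D = (ep + eqv) ^ 2 - (α + β) ^ 2) (hm : m = ep * β - eqv * α)
    (ha : a = 2 * (ep + eqv) * m / D) (hN : N = 2 * (α + β) * m / D) :
    0 < D ∧ ep ^ 2 + 2 * a * α + a ^ 2 = (ep + N) ^ 2 ∧ 0 < ep + N ∧
      eqv ^ 2 - 2 * a * β + a ^ 2 = (eqv - N) ^ 2 ∧ 0 < eqv - N ∧
      (ep + N) * (β - a) - (eqv - N) * (α + a) = -m := by
  have hDpos : 0 < D := by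
    have f1 : (0:ℝ) < ep + eqv - (α + β) := by linarith
    have f2 : (0:ℝ) < ep + eqv + (α + β) := by linarith
    nlinarith [mul_pos f1 f2]
  have hDne : D ≠ 0 := ne_of_gt hDpos
  refine ⟨hDpos, ?_, ?_, ?_, ?_, ?_⟩
  · subst hm ha hN hD; field_simp; ring
  · have hF : 0 < ep * D + 2 * (α + β) * m := by
      have key : 2 * (ep * D + 2 * (α + β) * m) =
          2 * (ep + 2 * eqv) * (ep ^ 2 - α ^ 2) + (ep - α) * (eqv + β) ^ 2 +
            (ep + α) * (eqv - β) ^ 2 := by rw [hD, hm]; ring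
      nlinarith [mul_pos (by linarith : (0:ℝ) < ep + 2 * eqv)
          (by nlinarith : (0:ℝ) < ep ^ 2 - α ^ 2),
        mul_nonneg (by linarith : (0:ℝ) ≤ ep - α) (sq_nonneg (eqv + β)),
        mul_nonneg (by linarith : (0:ℝ) ≤ ep + α) (sq_nonneg (eqv - β))]
    have : ep + N = (ep * D + 2 * (α + β) * m) / D := by rw [hN]; field_simp
    rw [this]; exact div_pos hF hDpos
  · subst hm ha hN hD; field_simp; ring
  · have hG : 0 < eqv * D - 2 * (α + β) * m := by
      have key : 2 * (eqv * D - 2 * (α + β) * m) =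
          2 * (eqv + 2 * ep) * (eqv ^ 2 - β ^ 2) + (eqv - β) * (ep + α) ^ 2 +
            (eqv + β) * (ep - α) ^ 2 := by rw [hD, hm]; ring
      nlinarith [mul_pos (by linarith : (0:ℝ) < eqv + 2 * ep)
          (by nlinarith : (0:ℝ) < eqv ^ 2 - β ^ 2),
        mul_nonneg (by linarith : (0:ℝ) ≤ eqv - β) (sq_nonneg (ep + α)),
        mul_nonneg (by linarith : (0:ℝ) ≤ eqv + β) (sq_nonneg (ep - α))]
    have : eqv - N = (eqv * D - 2 * (α + β) * m) / D := by rw [hN]; field_simp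
    rw [this]; exact div_pos hG hDpos
  · subst hm ha hN hD; field_simp; ring

/-- the Glassey–Strauss post-collisional variables satisfy the invariance
`ω·(p⁰q − q⁰p) = ω·(q′⁰p′ − p′⁰q′)`; consequently `a(p′,q′,ω) = −a(p,q,ω)` and
applying the Glassey–Strauss collision map to `(p′,q′)` with the same `ω`
returns `(p,q)`. -/
theorem statement14 (n : ℕ) (hn : 2 ≤ n) (c : ℝ) (hc : 0 < c)
    (p q : EuclideanSpace ℝ (Fin n)) (ω : EuclideanSpace ℝ (Fin n)) (hω : ‖ω‖ = 1) :
    dot n ω (energy n c p • q - energy n c q • p) =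
      dot n ω (energy n c (gsQ n c p q ω) • gsP n c p q ω -
        energy n c (gsP n c p q ω) • gsQ n c p q ω) ∧
    aGS n c (gsP n c p q ω) (gsQ n c p q ω) ω = -aGS n c p q ω ∧
    gsP n c (gsP n c p q ω) (gsQ n c p q ω) ω = p ∧
    gsQ n c (gsP n c p q ω) (gsQ n c p q ω) ω = q := by
  have hep := energy_pos n hc p
  have heq := energy_pos n hc q
  obtain ⟨hα1, hα2⟩ := abs_lt.1 (abs_dot_lt_energy n hc hω p)
  obtain ⟨hβ1, hβ2⟩ := abs_lt.1 (abs_dot_lt_energy n hc hω q)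
  have hωω : dot n ω ω = 1 := by rw [← norm_sq_eq_dot, hω]; norm_num
  have hdm : dot n ω (energy n c p • q - energy n c q • p) =
      energy n c p * dot n ω q - energy n c q * dot n ω p := by
    rw [dot_sub_right, dot_smul_right, dot_smul_right]
  obtain ⟨hDpos, key2, key3, key4, key5, key6⟩ :=
    gs_core (energy n c p) (energy n c q) (dot n ω p) (dot n ω q) (D1 n c p q ω)
      (energy n c p * dot n ω q - energy n c q * dot n ω p) (aGS n c p q ω) (N0 n c p q ω)
      hep heq hα1 hα2 hβ1 hβ2
      (by rw [D1, dot_add_right]) rfl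
      (by rw [aGS, hdm]) (by rw [N0, hdm, dot_add_right])
  have hc2p : c ^ 2 + dot n p p = energy n c p ^ 2 := by
    rw [energy_sq n hc, norm_sq_eq_dot]
  have hc2q : c ^ 2 + dot n q q = energy n c q ^ 2 := by
    rw [energy_sq n hc, norm_sq_eq_dot]
  have expandP : c ^ 2 + ‖gsP n c p q ω‖ ^ 2 = (energy n c p + N0 n c p q ω) ^ 2 := by
    rw [norm_sq_eq_dot]
    simp only [gsP, dot_add_right, dot_add_left, dot_smul_right, dot_smul_left, hωω]
    rw [dot_comm' n p ω]
    linear_combination key2 + hc2p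
  have expandQ : c ^ 2 + ‖gsQ n c p q ω‖ ^ 2 = (energy n c q - N0 n c p q ω) ^ 2 := by
    rw [norm_sq_eq_dot]
    simp only [gsQ, dot_sub_right, dot_sub_left, dot_smul_right, dot_smul_left, hωω]
    rw [dot_comm' n q ω]
    linear_combination key4 + hc2q
  have hEP : energy n c (gsP n c p q ω) = energy n c p + N0 n c p q ω := by
    rw [energy, expandP, Real.sqrt_sq key3.le]
  have hEQ : energy n c (gsQ n c p q ω) = energy n c q - N0 n c p q ω := by
    rw [energy, expandQ, Real.sqrt_sq key5.le]
  have hωp' : dot n ω (gsP n c p q ω) = dot n ω p + aGS n c p q ω := by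
    simp only [gsP, dot_add_right, dot_smul_right, hωω, mul_one]
  have hωq' : dot n ω (gsQ n c p q ω) = dot n ω q - aGS n c p q ω := by
    simp only [gsQ, dot_sub_right, dot_smul_right, hωω, mul_one]
  have conj1 : dot n ω (energy n c p • q - energy n c q • p) =
      dot n ω (energy n c (gsQ n c p q ω) • gsP n c p q ω -
        energy n c (gsP n c p q ω) • gsQ n c p q ω) := by
    rw [hdm, dot_sub_right, dot_smul_right, dot_smul_right, hEP, hEQ, hωp', hωq']
    linear_combination key6
  have hm' : dot n ω (energy n c (gsP n c p q ω) • gsQ n c p q ω -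
      energy n c (gsQ n c p q ω) • gsP n c p q ω) =
      -(energy n c p * dot n ω q - energy n c q * dot n ω p) := by
    rw [dot_sub_right, dot_smul_right, dot_smul_right, hEP, hEQ, hωp', hωq']
    linear_combination key6
  have hD' : D1 n c (gsP n c p q ω) (gsQ n c p q ω) ω = D1 n c p q ω := by
    rw [D1, D1, dot_add_right, dot_add_right, hEP, hEQ, hωp', hωq']
    ring
  have conj2 : aGS n c (gsP n c p q ω) (gsQ n c p q ω) ω = -aGS n c p q ω := by
    rw [aGS, hm', hD', hEP, hEQ, aGS, hdm]
    ring
  refine ⟨conj1, conj2, ?_, ?_⟩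
  · have e1 : gsP n c (gsP n c p q ω) (gsQ n c p q ω) ω =
        gsP n c p q ω + aGS n c (gsP n c p q ω) (gsQ n c p q ω) ω • ω := rfl
    have e2 : gsP n c p q ω = p + aGS n c p q ω • ω := rfl
    rw [e1, conj2, e2, neg_smul]
    abel
  · have e1 : gsQ n c (gsP n c p q ω) (gsQ n c p q ω) ω =
        gsQ n c p q ω - aGS n c (gsP n c p q ω) (gsQ n c p q ω) ω • ω := rfl
    have e2 : gsQ n c p q ω = q - aGS n c p q ω • ω := rfl
    rw [e1, conj2, e2, neg_smul, sub_neg_eq_add]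
    abel


end RelBoltz
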